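/- Let $\vartheta$ be the random substitution on $\{a,b,c\}$ with $\vartheta(a) = \{ab, ac\}$ and $\vartheta(b) = \vartheta(c) = \{a\}$. Then for all $n \geq 1$, the number of level-$n$ inflation words of type $a$ satisfies $\#\vartheta^n(a) = 2^{F_n}$, where $F_n$ is the $n$-th Fibonacci number ($F_0 = 0$, $F_1 = 1$). -/
import Mathlib

def substW {A : Type*} [DecidableEq A] (θ : A → Finset (List A)) : List A → Finset (List A)
  | [] => {[]}
  | a :: u => (θ a).biUnion fun v => (substW θ u).image fun w => v ++ w

def substIter {A : Type*} [DecidableEq A] (θ : A → Finset (List A)) : ℕ → List A → Finset (List A)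
  | 0, u => {u}
  | n + 1, u => (substW θ u).biUnion (substIter θ n)

inductive ABC | a | b | c
deriving DecidableEq

open ABC

def ϑ : ABC → Finset (List ABC)
  | a => {[a, b], [a, c]}
  | b => {[a]}
  | c => {[a]}

lemma substW_append {A : Type*} [DecidableEq A] (θ : A → Finset (List A)) (u v : List A) :
    substW θ (u ++ v) = (substW θ u).biUnion fun x => (substW θ v).image fun y => x ++ y := by
  induction u with
  | nil => simp [substW]
  | cons a u ih =>
    show substW θ (a :: (u ++ v)) = _
    rw [substW, substW, ih]
    ext w
    simp only [Finset.mem_biUnion, Finset.mem_image]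
    constructor
    · rintro ⟨p, hp, q, ⟨x, hx, y, hy, rfl⟩, rfl⟩
      exact ⟨p ++ x, ⟨p, hp, x, hx, rfl⟩, y, hy, List.append_assoc _ _ _⟩
    · rintro ⟨q, ⟨p, hp, x, hx, rfl⟩, y, hy, rfl⟩
      exact ⟨p, hp, x ++ y, ⟨x, hx, y, hy, rfl⟩, (List.append_assoc _ _ _).symm⟩

lemma substIter_append {A : Type*} [DecidableEq A] (θ : A → Finset (List A)) (n : ℕ)
    (u v : List A) :
    substIter θ n (u ++ v) =
      (substIter θ n u).biUnion fun x => (substIter θ n v).image fun y => x ++ y := by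
  induction n generalizing u v with
  | zero => simp [substIter]
  | succ n ih =>
    simp only [substIter, substW_append]
    ext w
    simp only [Finset.mem_biUnion, Finset.mem_image]
    constructor
    · rintro ⟨q, ⟨x, hx, y, hy, rfl⟩, hw⟩
      rw [ih] at hw
      simp only [Finset.mem_biUnion, Finset.mem_image] at hw
      obtain ⟨p, hp, r, hr, rfl⟩ := hw
      exact ⟨p, ⟨x, hx, hp⟩, r, ⟨y, hy, hr⟩, rfl⟩
    · rintro ⟨p, ⟨x, hx, hp⟩, r, ⟨y, hy, hr⟩, rfl⟩
      refine ⟨x ++ y, ⟨x, hx, y, hy, rfl⟩, ?_⟩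
      rw [ih]
      simp only [Finset.mem_biUnion, Finset.mem_image]
      exact ⟨p, hp, r, hr, rfl⟩

lemma substIter_succ_a (n : ℕ) :
    substIter ϑ (n + 1) [a] = substIter ϑ n [a, b] ∪ substIter ϑ n [a, c] := by
  have h : substW ϑ [a] = {[a, b], [a, c]} := by decide
  show (substW ϑ [a]).biUnion (substIter ϑ n) = _
  rw [h]
  ext w
  simp [Finset.mem_biUnion]

lemma substIter_succ_b (n : ℕ) : substIter ϑ (n + 1) [b] = substIter ϑ n [a] := by
  have h : substW ϑ [b] = {[a]} := by decide
  show (substW ϑ [b]).biUnion (substIter ϑ n) = _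
  rw [h]; simp

lemma substIter_succ_c (n : ℕ) : substIter ϑ (n + 1) [c] = substIter ϑ n [a] := by
  have h : substW ϑ [c] = {[a]} := by decide
  show (substW ϑ [c]).biUnion (substIter ϑ n) = _
  rw [h]; simp

def len : ℕ → ABC → ℕ
  | 0, _ => 1
  | n + 1, a => len n a + len n b
  | n + 1, b => len n a
  | n + 1, c => len n a

lemma len_spec : ∀ n x, ∀ w ∈ substIter ϑ n [x], w.length = len n x := by
  intro n
  induction n with
  | zero =>
    intro x w hw
    simp only [substIter, Finset.mem_singleton] at hw
    subst hw; rfl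
  | succ n ih =>
    intro x w hw
    cases x with
    | a =>
      rw [substIter_succ_a, Finset.mem_union] at hw
      rcases hw with hw | hw
      · rw [show ([a, b] : List ABC) = [a] ++ [b] from rfl, substIter_append] at hw
        simp only [Finset.mem_biUnion, Finset.mem_image] at hw
        obtain ⟨p, hp, q, hq, rfl⟩ := hw
        simp [len, ih a p hp, ih b q hq]
      · rw [show ([a, c] : List ABC) = [a] ++ [c] from rfl, substIter_append] at hw
        simp only [Finset.mem_biUnion, Finset.mem_image] at hw
        obtain ⟨p, hp, q, hq, rfl⟩ := hw
        have hc : ∀ m, len m c = len m b := by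
          intro m; cases m <;> rfl
        simp [len, ih a p hp, ih c q hq, hc]
    | b =>
      rw [substIter_succ_b] at hw
      exact ih a w hw
    | c =>
      rw [substIter_succ_c] at hw
      exact ih a w hw

lemma card_concat {A : Type*} [DecidableEq A] (S T : Finset (List A)) (L : ℕ)
    (hS : ∀ w ∈ S, w.length = L) :
    (S.biUnion fun x => T.image fun y => x ++ y).card = S.card * T.card := by
  rw [Finset.card_biUnion]
  · rw [Finset.sum_congr rfl fun x hx =>
      Finset.card_image_of_injective T (fun y y' h => by
        exact List.append_cancel_left h)]
    simp [mul_comm]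
  · intro x hx x' hx' hne
    simp only [Finset.disjoint_left, Finset.mem_image]
    rintro w ⟨y, hy, rfl⟩ ⟨y', hy', heq⟩
    have hlen : x.length = x'.length := by rw [hS x hx, hS x' hx']
    exact hne (List.append_inj heq.symm hlen).1

lemma key : ∀ n, (substIter ϑ n [a]).card = 2 ^ Nat.fib n ∧
    (substIter ϑ (n + 1) [a]).card = 2 ^ Nat.fib (n + 1) := by
  intro n
  induction n with
  | zero => constructor <;> decide
  | succ n ih =>
    refine ⟨ih.2, ?_⟩
    have habc : substIter ϑ (n + 1) [a, c] = substIter ϑ (n + 1) [a, b] := by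
      rw [show ([a, b] : List ABC) = [a] ++ [b] from rfl,
        show ([a, c] : List ABC) = [a] ++ [c] from rfl,
        substIter_append, substIter_append, substIter_succ_b, substIter_succ_c]
    rw [substIter_succ_a, habc, Finset.union_self,
      show ([a, b] : List ABC) = [a] ++ [b] from rfl, substIter_append,
      card_concat _ _ (len (n + 1) a) (len_spec (n + 1) a), substIter_succ_b,
      ih.1, ih.2, ← pow_add, Nat.fib_add_two, Nat.add_comm]

theorem stmt1 : ∀ n : ℕ, 1 ≤ n → (substIter ϑ n [a]).card = 2 ^ Nat.fib n := by
  intro n _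
  exact (key n).1
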